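/- Let R be a commutative ring, let d : Fin n → R and c : Fin n → Fin n → R be arbitrary (no symmetry assumed), and define A : Matrix (Fin n) (Fin n) R by A i j = c i j for i ≠ j and A i i = d i − ∑_{j ≠ i} c i j. Call a function f : Fin n → Option (Fin n) admissible if f i ≠ some i for all i and f is acyclic, i.e. there is no index i with Relation.TransGen (fun i j => f i = some j) i i. Then det A = ∑ over admissible f of (−1)^{#{i : f i ≠ none}} · ∏_{i} (if f i = none then d i else c i (the value of f i)). In particular, every Leibniz term of det A involving an off-diagonal entry via a nontrivial permutation is cancelled, and only cycle-free selections survive. -/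

import Mathlib

open Finset

/-- A selection `f : Fin n → Option (Fin n)` is admissible if no index selects itself
and the directed graph with an edge `i → j` whenever `f i = some j` has no cycle. -/
def Admissible {n : ℕ} (f : Fin n → Option (Fin n)) : Prop :=
  (∀ i, f i ≠ some i) ∧ ∀ i, ¬ Relation.TransGen (fun i j => f i = some j) i i

/-- The matrix `1 - P_f` where `P_f i j = 1` iff `f i = some j`. -/
def Nmat {R : Type*} [CommRing R] {n : ℕ} (f : Fin n → Option (Fin n)) :
    Matrix (Fin n) (Fin n) R :=
  Matrix.of fun i j => (if i = j then (1 : R) else 0) - (if f i = some j then 1 else 0)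


open Classical in
lemma det_Nmat_acyclic {R : Type*} [CommRing R] {n : ℕ} (f : Fin n → Option (Fin n))
    (hf : ∀ i, ¬ Relation.TransGen (fun i j => f i = some j) i i) :
    (Nmat (R := R) f).det = 1 := by
  set step : Fin n → Fin n → Prop := fun a b => f a = some b with hstep
  set h : Fin n → ℕ := fun i => (univ.filter fun k => Relation.TransGen step i k).card with hh
  have hlt : ∀ i j, f i = some j → h j < h i := by
    intro i j hij
    apply Finset.card_lt_card
    rw [Finset.ssubset_def]
    constructor
    · intro k hk
      simp only [mem_filter, mem_univ, true_and] at hk ⊢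
      exact Relation.TransGen.head hij hk
    · intro hcon
      have hjmem : j ∈ univ.filter fun k => Relation.TransGen step i k := by
        simp only [mem_filter, mem_univ, true_and]
        exact Relation.TransGen.single hij
      have := hcon hjmem
      simp only [mem_filter, mem_univ, true_and] at this
      exact hf j this
  have hbt : (Nmat (R := R) f).BlockTriangular (fun i => OrderDual.toDual (h i)) := by
    intro i j hij
    have h1 : i ≠ j := by rintro rfl; exact lt_irrefl _ hij
    have h2 : f i ≠ some j := by
      intro hc
      exact absurd (hlt i j hc) (not_lt_of_gt (by exact_mod_cast hij))
    simp [Nmat, h1, h2]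
  rw [hbt.det]
  apply Finset.prod_eq_one
  intro a _
  have : (Nmat (R := R) f).toSquareBlock (fun i => OrderDual.toDual (h i)) a = 1 := by
    ext i j
    rcases i with ⟨i, hi⟩
    rcases j with ⟨j, hj⟩
    by_cases hij : i = j
    · subst hij
      have : f i ≠ some i := fun hc => hf i (Relation.TransGen.single hc)
      simp [Matrix.toSquareBlock_def, Nmat, this, Matrix.one_apply]
    · have h2 : f i ≠ some j := by
        intro hc
        have := hlt i j hc
        have : h i = h j := by
          have := hi.trans hj.symm
          exact_mod_cast this
        omega
      have : (⟨i, hi⟩ : { k // OrderDual.toDual (h k) = a }) ≠ ⟨j, hj⟩ := by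
        simp [Subtype.ext_iff, hij]
      simp [Matrix.toSquareBlock_def, Nmat, hij, h2, Matrix.one_apply, this]
  rw [this, Matrix.det_one]

open Classical in
lemma det_Nmat_cycle {R : Type*} [CommRing R] {n : ℕ} (f : Fin n → Option (Fin n))
    {i₀ : Fin n} (hi₀ : Relation.TransGen (fun i j => f i = some j) i₀ i₀) :
    (Nmat (R := R) f).det = 0 := by
  set step : Fin n → Fin n → Prop := fun a b => f a = some b with hstep
  set S : Finset (Fin n) := univ.filter fun i => Relation.TransGen step i i with hS
  have hmemS : ∀ i, i ∈ S ↔ Relation.TransGen step i i := by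
    intro i; simp [hS]
  have hi₀S : i₀ ∈ S := (hmemS i₀).mpr hi₀
  -- for k ∈ S with f k = some j, j ∈ S
  have hnext : ∀ k j, k ∈ S → f k = some j → j ∈ S := by
    intro k j hk hkj
    rw [hmemS] at hk ⊢
    rcases (Relation.TransGen.head'_iff).mp hk with ⟨b, hb1, hb2⟩
    have : b = j := by
      have : f k = some b := hb1
      rw [hkj] at this; exact (Option.some_injective _ this.symm)
    subst this
    exact Relation.TransGen.tail' hb2 hb1
  -- existence of predecessor within S
  have hpred : ∀ j ∈ S, ∃ k ∈ S, f k = some j := by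
    intro j hj
    rw [hmemS] at hj
    rcases (Relation.TransGen.tail'_iff).mp hj with ⟨b, hb1, hb2⟩
    refine ⟨b, ?_, hb2⟩
    rw [hmemS]
    exact Relation.TransGen.head' hb2 hb1
  -- successor map on the subtype
  have hsucc : ∀ x : {i // i ∈ S}, ∃ y : {i // i ∈ S}, f x.1 = some y.1 := by
    intro ⟨x, hx⟩
    have hx' := (hmemS x).mp hx
    rcases (Relation.TransGen.head'_iff).mp hx' with ⟨b, hb1, hb2⟩
    exact ⟨⟨b, hnext x b hx hb1⟩, hb1⟩
  set nx : {i // i ∈ S} → {i // i ∈ S} := fun x => Classical.choose (hsucc x) with hnx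
  have hnxspec : ∀ x : {i // i ∈ S}, f x.1 = some (nx x).1 := fun x => Classical.choose_spec (hsucc x)
  have hnxsurj : Function.Surjective nx := by
    intro ⟨j, hj⟩
    rcases hpred j hj with ⟨k, hk, hkj⟩
    refine ⟨⟨k, hk⟩, ?_⟩
    have := hnxspec ⟨k, hk⟩
    rw [hkj] at this
    exact Subtype.ext (Option.some_injective _ this.symm)
  have hnxinj : Function.Injective nx := Finite.injective_iff_surjective.mpr hnxsurj
  -- uniqueness of predecessor
  have hupred : ∀ j k k', k ∈ S → k' ∈ S → f k = some j → f k' = some j → k = k' := by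
    intro j k k' hk hk' h1 h2
    have e1 : (nx ⟨k, hk⟩).1 = j := Option.some_injective _ ((hnxspec ⟨k, hk⟩).symm.trans h1)
    have e2 : (nx ⟨k', hk'⟩).1 = j := Option.some_injective _ ((hnxspec ⟨k', hk'⟩).symm.trans h2)
    have : nx ⟨k, hk⟩ = nx ⟨k', hk'⟩ := Subtype.ext (e1.trans e2.symm)
    have := hnxinj this
    exact congrArg Subtype.val this
  -- the rows of Nmat over S sum to zero
  have key : ∀ j, (∑ k ∈ S, Nmat (R := R) f k j) = 0 := by
    intro j
    have e1 : (∑ k ∈ S, (if k = j then (1 : R) else 0)) = if j ∈ S then 1 else 0 :=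
      Finset.sum_ite_eq' S j (fun _ => (1 : R))
    have e2 : (∑ k ∈ S, (if f k = some j then (1 : R) else 0)) = if j ∈ S then 1 else 0 := by
      by_cases hj : j ∈ S
      · rcases hpred j hj with ⟨k₀, hk₀, hk₀j⟩
        rw [Finset.sum_eq_single k₀]
        · simp [hk₀j, hj]
        · intro k hk hkk
          have : f k ≠ some j := fun hc => hkk (hupred j k k₀ hk hk₀ hc hk₀j)
          simp [this]
        · intro hcon; exact absurd hk₀ hcon
      · rw [if_neg hj]
        apply Finset.sum_eq_zero
        intro k hk
        have : f k ≠ some j := fun hc => hj (hnext k j hk hc)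
        simp [this]
    simp only [Nmat, Matrix.of_apply, Finset.sum_sub_distrib, e1, e2, sub_self]
  -- row operation: add all other rows of S to row i₀
  have haux := Matrix.det_updateRow_sum_aux (Nmat (R := R) f) (S.erase i₀)
    (Finset.notMem_erase i₀ S) (fun _ => (1 : R)) 1
  have hrow : ((1 : R) • (Nmat (R := R) f) i₀ + ∑ k ∈ S.erase i₀, (1 : R) • (Nmat (R := R) f) k)
      = 0 := by
    simp only [one_smul]
    rw [Finset.add_sum_erase S (fun k => (Nmat (R := R) f) k) hi₀S]
    funext j
    exact (Finset.sum_apply j S (fun k => (Nmat (R := R) f) k)).trans (key j)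
  rw [hrow] at haux
  rw [one_smul] at haux
  rw [← haux]
  apply Matrix.det_eq_zero_of_row_eq_zero i₀
  intro j
  simp

open Classical in
/-- **Lemma 2.** With diagonal entries `d i − ∑_{j ≠ i} c i j` (no symmetry assumed),
all Leibniz terms of `det A` involving an off-diagonal entry through a cycle cancel:
only acyclic selections survive. -/
theorem det_eq_sum_admissible {R : Type*} [CommRing R] {n : ℕ}
    (d : Fin n → R) (c : Fin n → Fin n → R)
    (A : Matrix (Fin n) (Fin n) R)
    (hoff : ∀ i j : Fin n, i ≠ j → A i j = c i j)
    (hdiag : ∀ i : Fin n,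
      A i i = d i - ∑ j ∈ Finset.univ.filter (fun j => j ≠ i), c i j) :
    A.det = ∑ f ∈ Finset.univ.filter (fun f : Fin n → Option (Fin n) => Admissible f),
      (-1 : R) ^ (Finset.univ.filter (fun i => f i ≠ none)).card *
        ∏ i, Option.elim (f i) (d i) (fun j => c i j) := by
  classical
  set g : Fin n → Option (Fin n) → (Fin n → R) := fun i o =>
    Option.elim o (fun j => if i = j then d i else 0)
      (fun k j => if k = i then 0 else
        c i k * ((if j = k then 1 else 0) - (if j = i then 1 else 0))) with hg
  -- Step 1: rows of A decompose
  have hrow : ∀ i, A i = ∑ o : Option (Fin n), g i o := by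
    intro i
    funext j
    rw [Finset.sum_apply, Fintype.sum_option]
    by_cases hij : i = j
    · subst hij
      have e0 : g i none i = d i := by simp [hg]
      have e1 : (∑ k, g i (some k) i) = - ∑ k ∈ univ.filter (fun k => k ≠ i), c i k := by
        rw [← Finset.sum_neg_distrib, Finset.sum_filter]
        apply Finset.sum_congr rfl
        intro k _
        by_cases hk : k = i
        · simp [hg, hk]
        · simp [hg, hk, Ne.symm hk]
      rw [show (A i) i = A i i from rfl, hdiag i, e0, e1, sub_eq_add_neg]
    · have hnone : g i none j = 0 := by simp [hg, hij]
      have hterm : ∀ k, g i (some k) j = if k = j then c i j else 0 := by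
        intro k
        by_cases hkj : k = j
        · subst hkj
          have hk : ¬ k = i := fun hc => hij hc.symm
          simp [hg, hk, Ne.symm hij]
        · by_cases hki : k = i
          · simp [hg, hki, hkj, hij]
          · simp [hg, hki, hkj, Ne.symm hij, Ne.symm hkj]
      simp only [hterm, hnone, zero_add]
      rw [Finset.sum_ite_eq' univ j (fun _ => c i j)]
      simp [hoff i j hij]
  -- Step 2: multilinear expansion
  have hdet : A.det = ∑ f : Fin n → Option (Fin n),
      Matrix.det (Matrix.of fun i j => g i (f i) j) := by
    have hA : A = Matrix.of (fun i => ∑ o : Option (Fin n), g i o) := by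
      ext i j
      rw [show A i j = (A i) j from rfl, hrow i]
      simp
    rw [hA]
    exact (Matrix.detRowAlternating (R := R) (n := Fin n)).toMultilinearMap.map_sum
      (g := g)
  -- Step 3: factorization for self-loop-free f
  have hfac : ∀ f : Fin n → Option (Fin n), (∀ i, f i ≠ some i) →
      Matrix.det (Matrix.of fun i j => g i (f i) j) =
        (∏ i, Option.elim (f i) (d i) (fun k => -c i k)) * (Nmat (R := R) f).det := by
    intro f hf
    have : (Matrix.of fun i j => g i (f i) j) =
        Matrix.of (fun i j => (Option.elim (f i) (d i) (fun k => -c i k)) *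
          (Nmat (R := R) f) i j) := by
      ext i j
      show g i (f i) j = (Option.elim (f i) (d i) (fun k => -c i k)) * (Nmat (R := R) f) i j
      rcases hfi : f i with _ | k
      · simp only [hg, hfi, Option.elim_none, Nmat, Matrix.of_apply]
        by_cases hij : i = j <;> simp [hij]
      · have hk : ¬ k = i := fun hc => hf i (by rw [hfi, hc])
        simp only [hg, hfi, Option.elim_some, Nmat, Matrix.of_apply, if_neg hk,
          Option.some.injEq]
        clear hg hrow hdet hoff hdiag hf hfi
        clear_value g
        clear g
        split_ifs <;> first | ring1 | (exfalso; subst_vars; simp_all)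
    rw [this]
    exact Matrix.det_mul_column _ _
  -- Step 4: split sum, kill non-admissible terms
  rw [hdet]
  rw [← Finset.sum_filter_add_sum_filter_not (Finset.univ : Finset (Fin n → Option (Fin n)))
    (fun f => Admissible f)]
  have hzero : ∑ f ∈ Finset.univ.filter (fun f : Fin n → Option (Fin n) => ¬ Admissible f),
      Matrix.det (Matrix.of fun i j => g i (f i) j) = 0 := by
    apply Finset.sum_eq_zero
    intro f hf
    simp only [Finset.mem_filter, Finset.mem_univ, true_and] at hf
    by_cases hsl : ∀ i, f i ≠ some i
    · have hcyc : ∃ i, Relation.TransGen (fun i j => f i = some j) i i := by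
        by_contra hcon
        push_neg at hcon
        exact hf ⟨hsl, hcon⟩
      rcases hcyc with ⟨i₀, hi₀⟩
      rw [hfac f hsl, det_Nmat_cycle f hi₀, mul_zero]
    · push_neg at hsl
      rcases hsl with ⟨i, hi⟩
      apply Matrix.det_eq_zero_of_row_eq_zero i
      intro j
      simp [hg, hi]
  rw [hzero, add_zero]
  -- Step 5: admissible terms
  apply Finset.sum_congr rfl
  intro f hf
  simp only [Finset.mem_filter, Finset.mem_univ, true_and] at hf
  rw [hfac f hf.1, det_Nmat_acyclic f hf.2, mul_one]
  have hsplit : ∀ i, Option.elim (f i) (d i) (fun k => -c i k) =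
      (if f i = none then (1 : R) else -1) * Option.elim (f i) (d i) (fun k => c i k) := by
    intro i
    rcases h : f i with _ | k <;> simp
  rw [Finset.prod_congr rfl (fun i _ => hsplit i), Finset.prod_mul_distrib]
  congr 1
  rw [Finset.prod_ite, Finset.prod_const_one, one_mul, Finset.prod_const]
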